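/- Let W be a Coxeter group with generating set S, and let γ be a Coxeter element with a fixed reduced word s_1 s_2 ⋯ s_n. For γ-sortable elements u, v ∈ W, u ≤_B v in Bruhat order if and only if α_γ(u) ⊆ α_γ(v), where α_γ(w) is the set of positions of the γ-sorting word of w within the infinite word γ^∞. -/

import Mathlib

/-! Sortable elements of a Coxeter group, following Reading.
We fix a rank `n` and a Coxeter system `cs` over the index type `Fin n`; the fixed reduced
word for the Coxeter element `γ` is `s 0 * s 1 * ⋯ * s (n-1)`.  Position `i` (0-based) of
the half-infinite word `γ^∞ = s 0 ⋯ s (n-1) | s 0 ⋯ s (n-1) | ⋯` carries the letter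
`i % n`. -/

variable {n : ℕ} [NeZero n] {W : Type*} [Group W] {M : CoxeterMatrix (Fin n)}

/-- The letter at position `i` of `γ^∞`. -/
def gammaLetter (n : ℕ) [NeZero n] (i : ℕ) : Fin n :=
  ⟨i % n, Nat.mod_lt i (Nat.pos_of_ne_zero (NeZero.ne n))⟩

/-- The subword of `γ^∞` with (finite) set of positions `A`. -/
def subwordOf (n : ℕ) [NeZero n] (A : Finset ℕ) : List (Fin n) :=
  (A.sort (· ≤ ·)).map (gammaLetter n)

/-- `A` is the set of filled positions `α_γ(w)` of the `γ`-sorting word of `w`: the subword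
of `γ^∞` at positions `A` is a reduced word for `w`, and it is lexicographically first among
all subwords of `γ^∞` that are reduced words for `w`. -/
def IsSortingPositions (cs : CoxeterSystem M W) (w : W) (A : Finset ℕ) : Prop :=
  cs.IsReduced (subwordOf n A) ∧ cs.wordProd (subwordOf n A) = w ∧
    ∀ A' : Finset ℕ, cs.IsReduced (subwordOf n A') → cs.wordProd (subwordOf n A') = w →
      ¬ List.Lex (· < ·) (A'.sort (· ≤ ·)) (A.sort (· ≤ ·))

/-- The blocks of the positions `A` are weakly decreasing, i.e. a letter filled in some
block is also filled in the preceding block. -/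
def BlocksDecreasing (n : ℕ) (A : Finset ℕ) : Prop :=
  ∀ p : ℕ, p + n ∈ A → p ∈ A

/-- `w` is `γ`-sortable: the blocks of its `γ`-sorting word are weakly decreasing. -/
def Sortable (cs : CoxeterSystem M W) (w : W) : Prop :=
  ∃ A : Finset ℕ, IsSortingPositions cs w A ∧ BlocksDecreasing n A

/-- Bruhat order: `u ≤_B v` iff some reduced word for `v` has a subword whose product
is `u`. -/
def Bruhat (cs : CoxeterSystem M W) (u v : W) : Prop :=
  ∃ l : List (Fin n), cs.IsReduced l ∧ cs.wordProd l = v ∧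
    ∃ l' : List (Fin n), l'.Sublist l ∧ cs.wordProd l' = u

namespace StmtAux

open scoped Classical

variable {B : Type*} {W : Type*} [Group W] {M : CoxeterMatrix B} (cs : CoxeterSystem M W)

local prefix:100 "s" => cs.simple
local prefix:100 "π" => cs.wordProd
local prefix:100 "ℓ" => cs.length
local prefix:100 "ris" => cs.rightInvSeq

/-- The Tits involution on `W × ZMod 2` attached to a simple reflection. -/
noncomputable def eta (i : B) : Equiv.Perm (W × ZMod 2) :=
  Function.Involutive.toPerm
    (fun p => (s i * p.1 * s i, p.2 + if p.1 = s i then 1 else 0))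
    (by
      intro p
      have h1 : s i * (s i * p.1 * s i) * s i = p.1 := by
        rw [← mul_assoc, ← mul_assoc, cs.simple_mul_simple_self, one_mul, mul_assoc,
          cs.simple_mul_simple_self, mul_one]
      have h2 : (s i * p.1 * s i = s i) ↔ (p.1 = s i) := by
        constructor
        · intro h
          have := congrArg (fun x => s i * x * s i) h
          rw [h1] at this
          rw [this, cs.simple_mul_simple_self, one_mul]
        · rintro h
          rw [h, cs.simple_mul_simple_self, one_mul]
      have h3 : (1 : ZMod 2) + 1 = 0 := by decide
      ext
      · exact h1
      · simp only [h2]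
        rcases eq_or_ne p.1 (s i) with h | h <;>
          simp [h, add_assoc, h3])

theorem eta_apply (i : B) (p : W × ZMod 2) :
    eta cs i p = (s i * p.1 * s i, p.2 + if p.1 = s i then 1 else 0) := rfl

/-- group-shift identity -/
private theorem shift_pow {G : Type*} [Group G] (a b : G) (t : ℕ) :
    b * (a * b) ^ t = (b * a) ^ t * b := by
  induction t with
  | zero => simp
  | succ t ih =>
    rw [pow_succ, ← mul_assoc, ih, pow_succ]
    group

theorem alt_drop (i j : B) : ∀ (k m : ℕ),
    (CoxeterSystem.alternatingWord i j m).drop k = CoxeterSystem.alternatingWord i j (m - k) := by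
  intro k
  induction k with
  | zero => simp
  | succ k ih =>
    intro m
    match m with
    | 0 => simp [CoxeterSystem.alternatingWord]
    | m + 1 =>
      rw [CoxeterSystem.alternatingWord_succ']
      show List.drop k (CoxeterSystem.alternatingWord i j m) = _
      rw [ih m]
      congr 1
      omega

private theorem alt_step {G : Type*} [Group G] (x y : G) (hx : x⁻¹ = x) (hy : y⁻¹ = y) (m : ℕ) :
    ((if Even m then 1 else y) * (x*y)^(m/2))⁻¹ *
      ((if Even (m+1) then 1 else y) * (x*y)^((m+1)/2)) = (y*x)^m * y := by
  have hinv : ((x*y)⁻¹) = y * x := by rw [mul_inv_rev, hx, hy]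
  have hpow : ∀ t : ℕ, ((x*y)^t)⁻¹ = (y*x)^t := by
    intro t; rw [← inv_pow, hinv]
  rcases Nat.even_or_odd m with hm | hm
  · obtain ⟨t, rfl⟩ := hm
    have h1 : ¬ Even (t + t + 1) := by simp [Nat.even_add_one, Nat.even_add]
    have h2 : (t + t)/2 = t := by omega
    have h3 : (t + t + 1)/2 = t := by omega
    simp only [if_pos (show Even (t + t) from ⟨t, rfl⟩), if_neg h1, one_mul, h2, h3]
    rw [hpow, shift_pow, ← mul_assoc, ← pow_add]
  · obtain ⟨t, rfl⟩ := hm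
    have h1 : ¬ Even (2*t + 1) := by simp [Nat.even_add_one]
    have h2 : Even (2*t+1+1) := by simp [Nat.even_add_one, h1]
    have h3 : (2*t+1)/2 = t := by omega
    have h4 : (2*t+1+1)/2 = t+1 := by omega
    simp only [if_neg h1, if_pos h2, one_mul, h3, h4]
    rw [mul_inv_rev, hpow, hy, mul_assoc, shift_pow, ← mul_assoc, ← pow_add]
    congr 2
    omega

theorem prod_alt_inv_mul (i j : B) (m : ℕ) :
    (π (CoxeterSystem.alternatingWord i j m))⁻¹ * π (CoxeterSystem.alternatingWord i j (m+1)) =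
      (s j * s i) ^ m * s j := by
  rw [cs.prod_alternatingWord_eq_mul_pow, cs.prod_alternatingWord_eq_mul_pow]
  exact alt_step (s i) (s j) (cs.inv_simple i) (cs.inv_simple j) m

theorem ris_cons (i : B) (ω : List B) :
    ris (i :: ω) = ((π ω)⁻¹ * s i * π ω) :: ris ω := rfl

theorem ris_alt_getD (i j : B) : ∀ (m k : ℕ), k < m →
    (ris (CoxeterSystem.alternatingWord i j m)).getD k 1 =
      (s j * s i) ^ (m - k - 1) * s j := by
  intro m
  induction m with
  | zero => omega
  | succ m ih =>
    intro k hk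
    rw [CoxeterSystem.alternatingWord_succ', ris_cons]
    match k with
    | 0 =>
      show (π (CoxeterSystem.alternatingWord i j m))⁻¹ * _ * _ = _
      have : (π (CoxeterSystem.alternatingWord i j m))⁻¹ *
          s (if Even m then j else i) * π (CoxeterSystem.alternatingWord i j m)
          = (π (CoxeterSystem.alternatingWord i j m))⁻¹ *
            π (CoxeterSystem.alternatingWord i j (m+1)) := by
        rw [CoxeterSystem.alternatingWord_succ', cs.wordProd_cons, mul_assoc]
      rw [this, prod_alt_inv_mul]
      have he : m + 1 - 0 - 1 = m := by omega
      rw [he]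
    | k + 1 =>
      show (ris (CoxeterSystem.alternatingWord i j m)).getD k 1 = _
      rw [ih k (by omega)]
      congr 2
      omega

theorem ris_alt_split (i j : B) (m : ℕ) (h : (s j * s i) ^ m = 1) :
    ris (CoxeterSystem.alternatingWord i j (2*m)) =
      ris (CoxeterSystem.alternatingWord i j m) ++
        ris (CoxeterSystem.alternatingWord i j m) := by
  have hdrop : (ris (CoxeterSystem.alternatingWord i j (2*m))).drop m
      = ris (CoxeterSystem.alternatingWord i j m) := by
    rw [← cs.rightInvSeq_drop, alt_drop]
    congr 2
    omega
  have hlen : (ris (CoxeterSystem.alternatingWord i j (2*m))).length = 2*m := by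
    rw [cs.length_rightInvSeq, CoxeterSystem.length_alternatingWord]
  have htake : (ris (CoxeterSystem.alternatingWord i j (2*m))).take m
      = ris (CoxeterSystem.alternatingWord i j m) := by
    apply List.ext_getElem
    · rw [List.length_take, hlen, cs.length_rightInvSeq,
        CoxeterSystem.length_alternatingWord]
      omega
    · intro k h1 h2
      rw [List.getElem_take]
      have hk : k < m := by
        rw [cs.length_rightInvSeq, CoxeterSystem.length_alternatingWord] at h2
        exact h2
      rw [← List.getD_eq_getElem _ 1, ← List.getD_eq_getElem _ 1,
        ris_alt_getD cs i j (2*m) k (by omega), ris_alt_getD cs i j m k hk]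
      have : 2*m - k - 1 = m + (m - k - 1) := by omega
      rw [this, pow_add, h, one_mul]
  conv_lhs => rw [← List.take_append_drop m
    (ris (CoxeterSystem.alternatingWord i j (2*m)))]
  rw [htake, hdrop]

theorem prod_alt_map {G : Type*} [Monoid G] (f : B → G) (i j : B) (m : ℕ) :
    (List.map f (CoxeterSystem.alternatingWord i j m)).prod
      = (if Even m then 1 else f j) * (f i * f j) ^ (m/2) := by
  induction m with
  | zero => simp [CoxeterSystem.alternatingWord]
  | succ m ih =>
    rw [CoxeterSystem.alternatingWord_succ', List.map_cons, List.prod_cons, ih]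
    rcases Nat.even_or_odd m with hm | hm
    · obtain ⟨t, rfl⟩ := hm
      have h1 : ¬ Even (t + t + 1) := by simp [Nat.even_add_one, Nat.even_add]
      have h2 : (t+t+1)/2 = (t+t)/2 := by omega
      simp [h1, h2, mul_assoc]
    · obtain ⟨t, rfl⟩ := hm
      have h1 : ¬ Even (2*t+1) := by simp [Nat.even_add_one]
      have h2 : Even (2*t+1+1) := by simp [Nat.even_add_one, h1]
      have h3 : (2*t+1+1)/2 = (2*t+1)/2 + 1 := by omega
      simp only [if_neg h1, if_pos h2, one_mul, h3]
      rw [pow_succ', ← mul_assoc]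

/-- parity count of a group element in the right inversion sequence -/
noncomputable def Ncount (ω : List B) (w : W) : ZMod 2 := ((ris ω).count w : ZMod 2)

theorem prod_eta_apply (ω : List B) (p : W × ZMod 2) :
    (List.prod (ω.map (eta cs))) p = (π ω * p.1 * (π ω)⁻¹, p.2 + Ncount cs ω p.1) := by
  induction ω with
  | nil => simp [Ncount]
  | cons i ω ih =>
    rw [List.map_cons, List.prod_cons, Equiv.Perm.mul_apply, ih, eta_apply]
    have hcond : (π ω * p.1 * (π ω)⁻¹ = s i) ↔ ((π ω)⁻¹ * s i * π ω = p.1) := by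
      constructor
      · intro h
        rw [← h]
        group
      · intro h
        rw [← h]
        group
    ext
    · show s i * (π ω * p.1 * (π ω)⁻¹) * s i = π (i :: ω) * p.1 * (π (i :: ω))⁻¹
      rw [cs.wordProd_cons, mul_inv_rev, cs.inv_simple]
      group
    · show p.2 + Ncount cs ω p.1 + _ = p.2 + Ncount cs (i :: ω) p.1
      have : Ncount cs (i :: ω) p.1 = Ncount cs ω p.1
          + if (π ω)⁻¹ * s i * π ω = p.1 then 1 else 0 := by
        unfold Ncount
        rw [ris_cons, List.count_cons]
        push_cast
        congr 1
        rcases eq_or_ne ((π ω)⁻¹ * s i * π ω) p.1 with h | h <;> simp [h]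
      rw [this, add_assoc]
      congr 1
      simp only [hcond]

theorem etaLiftable : M.IsLiftable (eta cs) := by
  intro i j
  have key : (eta cs i * eta cs j) ^ (M i j)
      = (List.map (eta cs) (CoxeterSystem.alternatingWord i j (2 * M i j))).prod := by
    rw [prod_alt_map]
    have h1 : Even (2 * M i j) := ⟨M i j, by omega⟩
    have h2 : 2 * M i j / 2 = M i j := by omega
    rw [if_pos h1, one_mul, h2]
  rw [key]
  apply Equiv.ext
  intro p
  rw [prod_eta_apply]
  have hπ : π (CoxeterSystem.alternatingWord i j (2 * M i j)) = 1 := by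
    rw [cs.prod_alternatingWord_eq_mul_pow]
    have h1 : Even (2 * M i j) := ⟨M i j, by omega⟩
    have h2 : 2 * M i j / 2 = M i j := by omega
    rw [if_pos h1, one_mul, h2, cs.simple_mul_simple_pow]
  have hN : Ncount cs (CoxeterSystem.alternatingWord i j (2 * M i j)) p.1 = 0 := by
    unfold Ncount
    rw [ris_alt_split cs i j (M i j) (cs.simple_mul_simple_pow' i j), List.count_append]
    push_cast
    exact CharTwo.add_self_eq_zero _
  rw [hπ, hN]
  simp

/-- The Tits representation of `W` by permutations of `W × ZMod 2`. -/
noncomputable def phiRep : W →* Equiv.Perm (W × ZMod 2) := cs.lift ⟨eta cs, etaLiftable cs⟩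

theorem phiRep_wordProd (ω : List B) (p : W × ZMod 2) :
    phiRep cs (π ω) p = (π ω * p.1 * (π ω)⁻¹, p.2 + Ncount cs ω p.1) := by
  have : phiRep cs (π ω) = (List.map (eta cs) ω).prod := by
    unfold CoxeterSystem.wordProd
    rw [MonoidHom.map_list_prod, List.map_map]
    congr 1
    apply List.map_congr_left
    intro i _
    exact cs.lift_apply_simple (etaLiftable cs) i
  rw [this, prod_eta_apply]

theorem Ncount_congr {ω ω' : List B} (h : π ω = π ω') (w : W) :
    Ncount cs ω w = Ncount cs ω' w := by
  have h1 := phiRep_wordProd cs ω (w, 0)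
  have h2 := phiRep_wordProd cs ω' (w, 0)
  rw [h] at h1
  rw [h1] at h2
  have := congrArg Prod.snd h2
  simpa using this

theorem phiRep_apply (w : W) (p : W × ZMod 2) :
    phiRep cs w p = (w * p.1 * w⁻¹, p.2 + (phiRep cs w (p.1, 0)).2) := by
  obtain ⟨ω, rfl⟩ := cs.wordProd_surjective w
  rw [phiRep_wordProd, phiRep_wordProd]
  simp

theorem Ncount_refl {t : W} (ht : cs.IsReflection t) (ω : List B) (hω : π ω = t) :
    Ncount cs ω t = 1 := by
  have key : (phiRep cs t (t, 0)).2 = 1 := by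
    obtain ⟨u, i, rfl⟩ := ht
    set t := u * s i * u⁻¹ with hdef
    have hconj : u⁻¹ * t * (u⁻¹)⁻¹ = s i := by rw [hdef]; group
    set a := (phiRep cs u⁻¹ (t, 0)).2 with hadef
    set b := (phiRep cs u (s i, 0)).2 with hbdef
    have e1 : phiRep cs u⁻¹ (t, 0) = (s i, a) := by
      rw [phiRep_apply, hconj]
      show (s i, 0 + (phiRep cs u⁻¹ (t, 0)).2) = (s i, a)
      rw [zero_add]
    have e2 : phiRep cs u (s i, a) = (t, a + b) := by
      rw [phiRep_apply]
    have e3 : a + b = 0 := by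
      have h5 : phiRep cs u (phiRep cs u⁻¹ (t, 0)) = (t, 0) := by
        rw [← Equiv.Perm.mul_apply, ← map_mul]
        simp
      rw [e1, e2] at h5
      exact (Prod.ext_iff.mp h5).2
    have e4 : phiRep cs (s i) (s i, a) = (s i, a + 1) := by
      have h6 : phiRep cs (s i) = eta cs i := cs.lift_apply_simple (etaLiftable cs) i
      rw [h6, eta_apply]
      simp [cs.simple_mul_simple_self, cs.simple_mul_simple_cancel_left]
    have e6 : phiRep cs t (t, 0) = (t, a + 1 + b) := by
      have hsplit : phiRep cs t = phiRep cs u * phiRep cs (s i) * phiRep cs u⁻¹ := by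
        rw [← map_mul, ← map_mul]
      rw [hsplit, Equiv.Perm.mul_apply, Equiv.Perm.mul_apply, e1, e4]
      have h7 : phiRep cs u (s i, a + 1) = (t, a + 1 + b) := by
        rw [phiRep_apply]
      rw [h7]
    rw [e6]
    show a + 1 + b = 1
    rw [add_comm a 1, add_assoc, e3, add_zero]
  have := phiRep_wordProd cs ω (t, 0)
  rw [hω] at this
  have := congrArg Prod.snd this
  simp only [zero_add] at this
  rw [key] at this
  exact this.symm

theorem ris_append (α β : List B) :
    ris (α ++ β) = (ris α).map (fun t => (π β)⁻¹ * t * (π β)) ++ ris β := by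
  induction α with
  | nil => simp
  | cons i α ih =>
    rw [List.cons_append, ris_cons, ris_cons, ih, List.map_cons, List.cons_append]
    congr 1
    rw [cs.wordProd_append, mul_inv_rev]
    group

theorem mem_ris_of_isRightInversion {w : W} (ω : List B) (hω : π ω = w) {t : W}
    (ht : cs.IsReflection t) (hl : ℓ (w * t) < ℓ w) : t ∈ ris ω := by
  obtain ⟨ω', hred', hω'⟩ := cs.exists_reduced_word' (w * t)
  obtain ⟨ρ, hρ⟩ := cs.wordProd_surjective t
  have hω₁ : π (ω' ++ ρ) = w := by
    rw [cs.wordProd_append, ← hω', hρ, mul_assoc, ht.mul_self, mul_one]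
  have hN : Ncount cs ω t = Ncount cs (ω' ++ ρ) t :=
    Ncount_congr cs (by rw [hω, hω₁]) t
  have hc0 : List.count t (ris ω') = 0 := by
    rw [List.count_eq_zero]
    intro hmem
    have := (cs.isRightInversion_of_mem_rightInvSeq hred' hmem).2
    rw [← hω', mul_assoc, ht.mul_self, mul_one] at this
    omega
  have hmapcount : List.count t ((ris ω').map (fun x => (π ρ)⁻¹ * x * (π ρ))) = 0 := by
    have hinj : Function.Injective (fun x : W => (π ρ)⁻¹ * x * (π ρ)) := by
      intro x y hxy
      simpa using hxy
    have hft : (fun x : W => (π ρ)⁻¹ * x * (π ρ)) t = t := by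
      simp only [hρ]
      have := ht.mul_self
      rw [ht.inv]
      calc t * t * t = 1 * t := by rw [ht.mul_self]
      _ = t := one_mul t
    conv_lhs => rw [← hft]
    rw [List.count_map_of_injective _ _ hinj, hc0]
  have hval : Ncount cs (ω' ++ ρ) t = 1 := by
    unfold Ncount
    rw [ris_append, List.count_append, hmapcount, zero_add]
    exact Ncount_refl cs ht ρ hρ
  rw [hval] at hN
  by_contra hmem
  have : List.count t (ris ω) = 0 := List.count_eq_zero.mpr hmem
  have : Ncount cs ω t = 0 := by unfold Ncount; rw [this]; simp
  rw [this] at hN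
  exact absurd hN (by decide)

theorem exchangeR {w : W} (ω : List B) (hω : π ω = w) {t : W}
    (ht : cs.IsReflection t) (hl : ℓ (w * t) < ℓ w) :
    ∃ j, j < ω.length ∧ π (ω.eraseIdx j) = w * t := by
  have hmem := mem_ris_of_isRightInversion cs ω hω ht hl
  obtain ⟨j, hj, hget⟩ := List.mem_iff_getElem.mp hmem
  rw [cs.length_rightInvSeq] at hj
  refine ⟨j, hj, ?_⟩
  rw [← cs.wordProd_mul_getD_rightInvSeq, hω,
    List.getD_eq_getElem _ 1 (by rw [cs.length_rightInvSeq]; exact hj), hget]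

theorem exchangeL {w : W} (ω : List B) (hω : π ω = w) {t : W}
    (ht : cs.IsReflection t) (hl : ℓ (t * w) < ℓ w) :
    ∃ ω', ω'.Sublist ω ∧ ω'.length + 1 = ω.length ∧ π ω' = t * w := by
  have hω' : π ω.reverse = w⁻¹ := by rw [cs.wordProd_reverse, hω]
  have hl' : ℓ (w⁻¹ * t) < ℓ w⁻¹ := by
    have h1 : w⁻¹ * t = (t * w)⁻¹ := by rw [mul_inv_rev, ht.inv]
    rw [h1, cs.length_inv, cs.length_inv]
    exact hl
  obtain ⟨j, hj, hprod⟩ := exchangeR cs ω.reverse hω' ht hl'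
  rw [List.length_reverse] at hj
  refine ⟨(ω.reverse.eraseIdx j).reverse, ?_, ?_, ?_⟩
  · have := (List.eraseIdx_sublist ω.reverse j).reverse
    rwa [List.reverse_reverse] at this
  · rw [List.length_reverse]
    have := List.length_eraseIdx_add_one (l := ω.reverse) (i := j)
      (by rwa [List.length_reverse])
    rw [List.length_reverse] at this
    exact this
  · rw [cs.wordProd_reverse, hprod, mul_inv_rev, ht.inv, inv_inv]

theorem deletion : ∀ (N : ℕ) (ω : List B), ω.length ≤ N →
    ∃ ω', ω'.Sublist ω ∧ cs.IsReduced ω' ∧ π ω' = π ω := by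
  intro N
  induction N with
  | zero =>
    intro ω hω
    rw [Nat.le_zero, List.length_eq_zero_iff] at hω
    subst hω
    exact ⟨[], List.Sublist.refl _, by simp [CoxeterSystem.IsReduced], rfl⟩
  | succ N ih =>
    intro ω hω
    by_cases hred : cs.IsReduced ω
    · exact ⟨ω, List.Sublist.refl _, hred, rfl⟩
    · have hex : ∃ j, ¬ cs.IsReduced (ω.take j) := ⟨ω.length, by rwa [List.take_length]⟩
      set k' := Nat.find hex with hk'def
      have hk'spec : ¬ cs.IsReduced (ω.take k') := Nat.find_spec hex
      have hk'le : k' ≤ ω.length := Nat.find_min' hex (by rwa [List.take_length])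
      have hk'pos : 0 < k' := by
        rcases Nat.eq_zero_or_pos k' with h | h
        · exfalso
          apply hk'spec
          rw [h]
          simp [CoxeterSystem.IsReduced]
        · exact h
      set k := k' - 1 with hkdef
      have hkk' : k + 1 = k' := by omega
      have hklt : k < ω.length := by omega
      have hkred : cs.IsReduced (ω.take k) := by
        by_contra h
        have := Nat.find_min' hex h
        omega
      have htakesucc : ω.take (k+1) = ω.take k ++ [ω[k]] := by
        rw [List.take_succ]
        congr 1
        rw [List.getElem?_eq_getElem hklt]
        rfl
      have hx : ℓ (π (ω.take k)) = k := by
        have := hkred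
        unfold CoxeterSystem.IsReduced at this
        rw [this, List.length_take]
        omega
      have hnotred : ¬ cs.IsReduced (ω.take (k+1)) := by rwa [hkk']
      have hprod1 : π (ω.take (k+1)) = π (ω.take k) * s ω[k] := by
        rw [htakesucc, cs.wordProd_append, cs.wordProd_singleton]
      have hdesc : ℓ (π (ω.take k) * s ω[k]) < ℓ (π (ω.take k)) := by
        rcases cs.length_mul_simple (π (ω.take k)) ω[k] with h | h
        · exfalso
          apply hnotred
          unfold CoxeterSystem.IsReduced
          rw [hprod1, h, hx, List.length_take]
          omega
        · omega
      obtain ⟨j, hjlt, hjprod⟩ := exchangeR cs (ω.take k) rfl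
        (cs.isReflection_simple ω[k]) hdesc
      set ω₁ := (ω.take k).eraseIdx j ++ ω.drop (k+1) with hω₁def
      have hsub : ω₁.Sublist ω := by
        have h1 : ((ω.take k).eraseIdx j).Sublist (ω.take (k+1)) := by
          apply (List.eraseIdx_sublist _ j).trans
          rw [htakesucc]
          exact List.sublist_append_left _ _ |>.trans (List.Sublist.refl _)
        have h2 : ω₁.Sublist (ω.take (k+1) ++ ω.drop (k+1)) :=
          List.Sublist.append h1 (List.Sublist.refl _)
        rwa [List.take_append_drop] at h2
      have hprod : π ω₁ = π ω := by
        rw [hω₁def, cs.wordProd_append, hjprod, ← hprod1, ← cs.wordProd_append,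
          List.take_append_drop]
      have hlen : ω₁.length ≤ N := by
        have h4 := List.length_eraseIdx_add_one hjlt
        rw [List.length_take] at h4
        rw [hω₁def, List.length_append, List.length_drop]
        omega
      obtain ⟨ω', h1, h2, h3⟩ := ih ω₁ hlen
      exact ⟨ω', h1.trans hsub, h2, by rw [h3, hprod]⟩

theorem exists_reduced_sublist (ω : List B) :
    ∃ ω', ω'.Sublist ω ∧ cs.IsReduced ω' ∧ π ω' = π ω :=
  deletion cs ω.length ω le_rfl

/-- A Bruhat covering-type edge. -/
def edge (a b : W) : Prop := ∃ t, cs.IsReflection t ∧ b = a * t ∧ ℓ a < ℓ b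

/-- Bruhat order via chains of reflections. -/
def chainLe : W → W → Prop := Relation.ReflTransGen (edge cs)

/-- Bruhat order via the subword property (with respect to every reduced word). -/
def leE (u v : W) : Prop := ∀ ω : List B, cs.IsReduced ω → π ω = v →
  ∃ m, m.Sublist ω ∧ cs.IsReduced m ∧ π m = u

theorem chainLe_to_leE {u v : W} (h : chainLe cs u v) : leE cs u v := by
  induction h with
  | refl => exact fun ω hred hω => ⟨ω, List.Sublist.refl _, hred, hω⟩
  | tail hchain hedge ih =>
    obtain ⟨t, ht, rfl, hlen⟩ := hedge
    intro ω hred hω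
    have hct : ℓ (π ω * t) < ℓ (π ω) := by
      rw [hω, mul_assoc, ht.mul_self, mul_one]
      exact hlen
    obtain ⟨j, hj, hjprod⟩ := exchangeR cs ω rfl ht hct
    rw [hω, mul_assoc, ht.mul_self, mul_one] at hjprod
    obtain ⟨ρ, hρsub, hρred, hρprod⟩ := exists_reduced_sublist cs (ω.eraseIdx j)
    rw [hjprod] at hρprod
    obtain ⟨m, hmsub, hmred, hmprod⟩ := ih ρ hρred hρprod
    exact ⟨m, hmsub.trans (hρsub.trans (List.eraseIdx_sublist _ _)), hmred, hmprod⟩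

theorem master : ∀ N : ℕ,
    (∀ v : W, ℓ v ≤ N → ∀ ω m : List B, cs.IsReduced ω → π ω = v → m.Sublist ω →
      cs.IsReduced m → chainLe cs (π m) v)
    ∧ (∀ b a : W, ℓ b ≤ N → ∀ i : B, chainLe cs a b → ℓ a < ℓ (s i * a) →
      ℓ b < ℓ (s i * b) → chainLe cs (s i * a) (s i * b)) := by
  intro N
  induction N using Nat.strong_induction_on with
  | _ N IH =>
  constructor
  · -- SC
    intro v hv ω m hred hω hsub hmred
    match ω, hsub with
    | [], hsub =>
      rw [List.sublist_nil.mp hsub]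
      rw [← hω]
      exact Relation.ReflTransGen.refl
    | i :: ω₁, hsub =>
      have hred1 : cs.IsReduced ω₁ := by
        have := CoxeterSystem.IsReduced.drop hred 1
        simpa using this
      set v₁ := π ω₁ with hv₁
      have hlenv : ℓ v = ω₁.length + 1 := by
        rw [← hω]
        have := hred
        unfold CoxeterSystem.IsReduced at this
        rw [this]
        simp
      have hlenv₁ : ℓ v₁ = ω₁.length := hred1
      have hNpos : 1 ≤ N := by omega
      have hedge : edge cs v₁ v := by
        refine ⟨v₁⁻¹ * s i * (v₁⁻¹)⁻¹, (cs.isReflection_simple i).conj v₁⁻¹, ?_, by omega⟩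
        rw [← hω, cs.wordProd_cons, ← hv₁]
        group
      rcases List.sublist_cons_iff.mp hsub with hmc | ⟨m₁, rfl, hm₁⟩
      · have := (IH (N-1) (by omega)).1 v₁ (by omega) ω₁ m hred1 rfl hmc hmred
        exact this.tail hedge
      · have hm₁red : cs.IsReduced m₁ := by
          have := CoxeterSystem.IsReduced.drop hmred 1
          simpa using this
        have hchain1 := (IH (N-1) (by omega)).1 v₁ (by omega) ω₁ m₁ hred1 rfl hm₁ hm₁red
        have h2 := (IH (N-1) (by omega)).2 v₁ (π m₁) (by omega) i hchain1 ?_ ?_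
        · rw [← cs.wordProd_cons] at h2
          rw [← hω, cs.wordProd_cons]
          exact h2
        · have h3 : s i * π m₁ = π (i :: m₁) := (cs.wordProd_cons i m₁).symm
          rw [h3]
          have h4 : ℓ (π (i :: m₁)) = m₁.length + 1 := by
            have := hmred
            unfold CoxeterSystem.IsReduced at this
            rw [this]
            simp
          rw [h4, hm₁red]
          omega
        · rw [← cs.wordProd_cons, hω]
          omega
  · -- LIFT
    have key : ∀ {a b : W}, chainLe cs a b → ∀ i : B, ℓ b ≤ N → ℓ a < ℓ (s i * a) →
        ℓ b < ℓ (s i * b) → chainLe cs (s i * a) (s i * b) := by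
      intro a b h
      induction h with
      | refl => intro i _ _ _; exact Relation.ReflTransGen.refl
      | @tail c b hac hedge ih =>
        intro i hb ha hsb
        obtain ⟨t, ht, rfl, hlen⟩ := hedge
        by_cases hsc : ℓ c < ℓ (s i * c)
        · have h1 : chainLe cs (s i * a) (s i * c) := ih i (by omega) ha hsc
          refine h1.tail ⟨t, ht, by rw [mul_assoc], ?_⟩
          have e1 : ℓ (s i * c) = ℓ c + 1 := by
            rcases cs.length_simple_mul c i with h | h <;> omega
          have e2 : ℓ (s i * (c * t)) = ℓ (c * t) + 1 := by
            rcases cs.length_simple_mul (c * t) i with h | h <;> omega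
          rw [← mul_assoc] at e2 ⊢
          omega
        · have hdesc : ℓ (s i * c) < ℓ c := by
            rcases cs.length_simple_mul c i with h | h <;> omega
          obtain ⟨ρ, hρred, hρ⟩ := cs.exists_reduced_word' (s i * c)
          have hwc : π (i :: ρ) = c := by
            rw [cs.wordProd_cons, ← hρ, cs.simple_mul_simple_cancel_left]
          have hredc : cs.IsReduced (i :: ρ) := by
            unfold CoxeterSystem.IsReduced
            rw [hwc]
            have h5 : ℓ (s i * c) = ρ.length := by rw [hρ]; exact hρred
            simp only [List.length_cons]
            rcases cs.length_simple_mul c i with h6 | h6 <;> omega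
          obtain ⟨m, hmsub, hmred, hmprod⟩ := chainLe_to_leE cs hac (i :: ρ) hredc hwc
          rcases List.sublist_cons_iff.mp hmsub with hmc | ⟨m₁, rfl, hm₁⟩
          · have hchain2 : chainLe cs a (s i * c) := by
              have := (IH (ℓ (s i * c)) (by omega)).1 (s i * c) le_rfl ρ m hρred hρ.symm
                hmc hmred
              rwa [hmprod] at this
            have hchain3 : chainLe cs (s i * a) c := by
              have h6 := (IH (ℓ (s i * c)) (by omega)).2 (s i * c) a le_rfl i hchain2 ha
                (by rw [cs.simple_mul_simple_cancel_left]; omega)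
              rwa [cs.simple_mul_simple_cancel_left] at h6
            have hchain4 : chainLe cs (s i * a) (c * t) := hchain3.tail ⟨t, ht, rfl, hlen⟩
            refine hchain4.tail ⟨(c*t)⁻¹ * s i * ((c*t)⁻¹)⁻¹,
              (cs.isReflection_simple i).conj (c*t)⁻¹, ?_, hsb⟩
            group
          · exfalso
            have h7 : ℓ (π (i :: m₁)) = m₁.length + 1 := by
              have := hmred
              unfold CoxeterSystem.IsReduced at this
              rw [this]
              simp
            have h8 : s i * a = π m₁ := by
              rw [← hmprod, cs.wordProd_cons, cs.simple_mul_simple_cancel_left]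
            have h9 : ℓ (s i * a) ≤ m₁.length := by
              rw [h8]
              exact cs.length_wordProd_le m₁
            rw [hmprod] at h7
            omega
    intro b a hb i hchain ha hsb
    exact key hchain i hb ha hsb

theorem subword_chain {ω m : List B} (hred : cs.IsReduced ω) (hsub : m.Sublist ω)
    (hmred : cs.IsReduced m) : chainLe cs (π m) (π ω) :=
  (master cs (ℓ (π ω))).1 (π ω) le_rfl ω m hred rfl hsub hmred

theorem leE_trans {u v w : W} (h1 : leE cs u v) (h2 : leE cs v w) : leE cs u w := by
  intro ω hred hω
  obtain ⟨mv, h3, h4, h5⟩ := h2 ω hred hω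
  obtain ⟨mu, h6, h7, h8⟩ := h1 mv h4 h5
  exact ⟨mu, h6.trans h3, h7, h8⟩

theorem leE_one {u : W} (h : leE cs u 1) : u = 1 := by
  obtain ⟨m, hsub, _, hprod⟩ := h [] (by simp [CoxeterSystem.IsReduced]) (by simp)
  rw [List.sublist_nil.mp hsub] at hprod
  simp at hprod
  exact hprod.symm

theorem leE_length {u v : W} (h : leE cs u v) : ℓ u ≤ ℓ v := by
  obtain ⟨ω, hred, hω⟩ := cs.exists_reduced_word' v
  obtain ⟨m, hsub, hmred, hprod⟩ := h ω hred hω.symm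
  rw [← hprod]
  calc ℓ (π m) ≤ m.length := cs.length_wordProd_le m
  _ ≤ ω.length := hsub.length_le
  _ = ℓ v := by rw [hω]; exact hred.symm

theorem F1 {u v : W} {i : B} (h : leE cs u v) (hu : ℓ (s i * u) < ℓ u)
    (hv : ℓ (s i * v) < ℓ v) : leE cs (s i * u) (s i * v) := by
  intro ω' hred' hω'
  have hcons : π (i :: ω') = v := by
    rw [cs.wordProd_cons, hω', cs.simple_mul_simple_cancel_left]
  have hredc : cs.IsReduced (i :: ω') := by
    unfold CoxeterSystem.IsReduced
    rw [hcons]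
    have h5 : ℓ (s i * v) = ω'.length := by rw [← hω']; exact hred'
    rcases cs.length_simple_mul v i with h6 | h6 <;> simp <;> omega
  obtain ⟨m, hmsub, hmred, hmprod⟩ := h (i :: ω') hredc hcons
  rcases List.sublist_cons_iff.mp hmsub with hmc | ⟨m₁, rfl, hm₁⟩
  · obtain ⟨m', hm'sub, hm'len, hm'prod⟩ := exchangeL cs m hmprod
      (cs.isReflection_simple i) hu
    have hm'red : cs.IsReduced m' := by
      unfold CoxeterSystem.IsReduced
      rw [hm'prod]
      have h10 : ℓ u = m.length := by rw [← hmprod]; exact hmred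
      rcases cs.length_simple_mul u i with h11 | h11 <;> omega
    exact ⟨m', hm'sub.trans hmc, hm'red, hm'prod⟩
  · refine ⟨m₁, hm₁, ?_, ?_⟩
    · have := CoxeterSystem.IsReduced.drop hmred 1
      simpa using this
    · rw [← hmprod, cs.wordProd_cons, cs.simple_mul_simple_cancel_left]

theorem F2 {u v : W} {i : B} (h : leE cs u v) (hu : ¬ ℓ (s i * u) < ℓ u)
    (hv : ℓ (s i * v) < ℓ v) : leE cs u (s i * v) := by
  intro ω' hred' hω'
  have hcons : π (i :: ω') = v := by
    rw [cs.wordProd_cons, hω', cs.simple_mul_simple_cancel_left]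
  have hredc : cs.IsReduced (i :: ω') := by
    unfold CoxeterSystem.IsReduced
    rw [hcons]
    have h5 : ℓ (s i * v) = ω'.length := by rw [← hω']; exact hred'
    rcases cs.length_simple_mul v i with h6 | h6 <;> simp <;> omega
  obtain ⟨m, hmsub, hmred, hmprod⟩ := h (i :: ω') hredc hcons
  rcases List.sublist_cons_iff.mp hmsub with hmc | ⟨m₁, rfl, hm₁⟩
  · exact ⟨m, hmc, hmred, hmprod⟩
  · exfalso
    apply hu
    have h7 : ℓ (π (i :: m₁)) = m₁.length + 1 := by
      have := hmred
      unfold CoxeterSystem.IsReduced at this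
      rw [this]
      simp
    have h8 : s i * u = π m₁ := by
      rw [← hmprod, cs.wordProd_cons, cs.simple_mul_simple_cancel_left]
    have h9 : ℓ (s i * u) ≤ m₁.length := by
      rw [h8]
      exact cs.length_wordProd_le m₁
    rw [hmprod] at h7
    omega

theorem bruhat_to_leE {u v : W} (l : List B) (hred : cs.IsReduced l) (hl : π l = v)
    (l' : List B) (hsub : l'.Sublist l) (hl' : π l' = u) : leE cs u v := by
  obtain ⟨m, h1, h2, h3⟩ := exists_reduced_sublist cs l'
  rw [hl'] at h3
  have := subword_chain cs hred (h1.trans hsub) h2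
  rw [h3, hl] at this
  exact chainLe_to_leE cs this

/-! ### Part III: the geometric representation, and injectivity of the simple system -/

set_option linter.unusedSectionVars false

section Geometric

variable [Fintype B] [DecidableEq B]

/-- entries of the cosine matrix -/
noncomputable def kappaR (M : CoxeterMatrix B) (k l : B) : ℝ :=
  if M k l = 0 then -2 else -2 * Real.cos (Real.pi / M k l)

theorem kappaR_symm (k l : B) : kappaR M k l = kappaR M l k := by
  unfold kappaR
  rw [M.isSymm.apply k l]

theorem kappaR_diag (k : B) : kappaR M k k = 2 := by
  unfold kappaR
  rw [M.diagonal k]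
  norm_num

variable (M) in
/-- the linear functional `v ↦ ∑ κ k l * v l` -/
noncomputable def formF (k : B) : (B → ℂ) →ₗ[ℂ] ℂ :=
  ∑ l, (kappaR M k l : ℂ) • LinearMap.proj l

theorem formF_apply (k : B) (v : B → ℂ) : formF M k v = ∑ l, (kappaR M k l : ℂ) * v l := by
  simp [formF]

theorem formF_single (k l : B) : formF M k (Pi.single l 1) = (kappaR M k l : ℂ) := by
  rw [formF_apply]
  rw [Finset.sum_eq_single l]
  · simp
  · intro b _ hb
    simp [Pi.single_apply, hb]
  · simp

variable (M) in
/-- the geometric reflection attached to `k` -/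
noncomputable def sigmaE (k : B) : Module.End ℂ (B → ℂ) where
  toFun v := v - formF M k v • (Pi.single k 1 : B → ℂ)
  map_add' u v := by
    simp only [map_add]
    module
  map_smul' c v := by
    simp only [map_smul, smul_eq_mul, RingHom.id_apply]
    module

theorem sigmaE_apply (k : B) (v : B → ℂ) :
    sigmaE M k v = v - formF M k v • (Pi.single k 1 : B → ℂ) := rfl

theorem sigmaE_sq (k : B) : sigmaE M k * sigmaE M k = 1 := by
  apply LinearMap.ext
  intro v
  rw [Module.End.mul_apply, Module.End.one_apply, sigmaE_apply, sigmaE_apply]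
  rw [map_sub, map_smul, formF_single, kappaR_diag]
  push_cast
  simp only [smul_eq_mul]
  module

private theorem pow_eig {f : Module.End ℂ (B → ℂ)} {a : ℂ} {v : B → ℂ}
    (h : f v = a • v) : ∀ m : ℕ, (f ^ m) v = a ^ m • v := by
  intro m
  induction m with
  | zero => simp
  | succ m ih =>
    rw [pow_succ', Module.End.mul_apply, ih, map_smul, h, smul_smul, ← pow_succ]

theorem sigmaE_braid {k l : B} (hkl : k ≠ l) (hM : M k l ≠ 0) :
    (sigmaE M k * sigmaE M l) ^ (M k l : ℕ) = 1 := by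
  set m : ℕ := M k l with hm
  have hm1 : m ≠ 1 := M.off_diagonal k l hkl
  have hm2 : 2 ≤ m := by omega
  set θ : ℝ := Real.pi / m with hθ
  have hπ := Real.pi_pos
  have hmR : (0:ℝ) < m := by positivity
  have hθpos : 0 < θ := by positivity
  have hm2R : (2:ℝ) ≤ m := by exact_mod_cast hm2
  have hθlt : θ < Real.pi := by
    rw [hθ, div_lt_iff₀ hmR]
    nlinarith [Real.pi_pos]
  have hκ : kappaR M k l = -2 * Real.cos θ := by
    unfold kappaR
    rw [if_neg hM]
  set ζ : ℂ := Complex.exp (θ * Complex.I) with hζ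
  have hζ0 : ζ ≠ 0 := Complex.exp_ne_zero _
  have hζinv : ζ⁻¹ = Complex.exp (-(θ * Complex.I)) := by
    rw [hζ, ← Complex.exp_neg]
  have hζsum : ζ + ζ⁻¹ = 2 * Real.cos θ := by
    rw [hζ, hζinv, neg_mul_eq_neg_mul, Complex.exp_mul_I, Complex.exp_mul_I]
    push_cast
    rw [Complex.cos_neg, Complex.sin_neg]
    ring
  have hκζ : (kappaR M k l : ℂ) = -(ζ + ζ⁻¹) := by
    rw [hζsum, hκ]
    push_cast
    ring
  have hζ2m : ζ ^ (2 * m) = 1 := by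
    rw [hζ, ← Complex.exp_nat_mul]
    have h7 : (2 * m : ℕ) * (θ * Complex.I) = 2 * Real.pi * Complex.I := by
      have hmne : (m : ℂ) ≠ 0 := by
        simp only [ne_eq, Nat.cast_eq_zero]
        omega
      rw [hθ]
      push_cast
      field_simp
    rw [h7, Complex.exp_two_pi_mul_I]
  have hζ2ne : ζ ^ 2 ≠ 1 := by
    intro hcon
    rw [hζ, ← Complex.exp_nat_mul, Complex.exp_eq_one_iff] at hcon
    obtain ⟨j, hj⟩ := hcon
    have hj' : ((2*θ : ℝ) : ℂ) * Complex.I = (((j : ℝ) * (2*Real.pi) : ℝ) : ℂ) * Complex.I := by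
      push_cast
      push_cast at hj
      linear_combination hj
    have hj2 := mul_right_cancel₀ Complex.I_ne_zero hj'
    have hj3 : (2*θ : ℝ) = (j:ℝ) * (2*Real.pi) := by exact_mod_cast hj2
    have hθub : 2*θ ≤ Real.pi := by
      rw [hθ, mul_div_assoc']
      rw [div_le_iff₀ hmR]
      nlinarith
    rcases le_or_gt (j:ℝ) 0 with hjle | hjgt
    · nlinarith
    · have : (1:ℝ) ≤ (j:ℝ) := by exact_mod_cast hjgt
      nlinarith
  have hζne : ζ - ζ⁻¹ ≠ 0 := by
    intro hcon
    apply hζ2ne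
    have : ζ = ζ⁻¹ := by linear_combination hcon
    have h8 : ζ * ζ = ζ * ζ⁻¹ := by rw [← this]
    rw [mul_inv_cancel₀ hζ0] at h8
    rw [pow_two, h8]
  set eK : B → ℂ := (Pi.single k 1 : B → ℂ) with heKdef
  set eL : B → ℂ := (Pi.single l 1 : B → ℂ) with heLdef
  set g := sigmaE M k * sigmaE M l with hg
  set κ : ℂ := (kappaR M k l : ℂ) with hκdef
  have hformLK : formF M l eK = κ := by rw [heKdef, formF_single, ← kappaR_symm]
  have hformKL : formF M k eL = κ := by rw [heLdef, formF_single]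
  have hformKK : formF M k eK = 2 := by
    rw [heKdef, formF_single, kappaR_diag]
    norm_num
  have hformLL : formF M l eL = 2 := by
    rw [heLdef, formF_single, kappaR_diag]
    norm_num
  have heig : ∀ z : ℂ, z ≠ 0 → κ = -(z + z⁻¹) → g (z • eK + eL) = z^2 • (z • eK + eL) := by
    intro z hz hka
    have h1 : sigmaE M l (z • eK + eL) = z • eK + (z^2) • eL := by
      rw [sigmaE_apply, map_add, map_smul, hformLK, hformLL]
      rw [hka]
      match_scalars
      · ring
      · field_simp
        linear_combination (1 + z^2) * mul_inv_cancel₀ hz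
    rw [hg, Module.End.mul_apply, h1, sigmaE_apply, map_add, map_smul, map_smul,
      hformKK, hformKL, hka]
    match_scalars
    · field_simp
      linear_combination (z + z^3) * mul_inv_cancel₀ hz
    · ring
  have hp1 : g (ζ • eK + eL) = (ζ^2) • (ζ • eK + eL) := heig ζ hζ0 hκζ
  have hp2 : g (ζ⁻¹ • eK + eL) = ((ζ⁻¹)^2) • (ζ⁻¹ • eK + eL) := by
    refine heig ζ⁻¹ (inv_ne_zero hζ0) ?_
    rw [inv_inv, hκζ, add_comm]
  have hone1 : (ζ^2)^m = 1 := by rw [← pow_mul, ← hζ2m]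
  have hone2 : ((ζ⁻¹)^2)^m = 1 := by
    rw [inv_pow, inv_pow, ← pow_mul, hζ2m, inv_one]
  have hg1 : (g^m) (ζ • eK + eL) = ζ • eK + eL := by
    rw [pow_eig hp1 m, hone1, one_smul]
  have hg2 : (g^m) (ζ⁻¹ • eK + eL) = ζ⁻¹ • eK + eL := by
    rw [pow_eig hp2 m, hone2, one_smul]
  have hzz : ζ * ζ - 1 ≠ 0 := by
    intro hcon
    apply hζ2ne
    rw [pow_two]
    linear_combination hcon
  have heK : (g^m) eK = eK := by
    have hcomb : eK = (ζ - ζ⁻¹)⁻¹ • ((ζ • eK + eL) - (ζ⁻¹ • eK + eL)) := by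
      match_scalars
      · field_simp
      · ring
    rw [hcomb, map_smul, map_sub, hg1, hg2]
  have heL : (g^m) eL = eL := by
    have hcomb : eL = (ζ • eK + eL) - ζ • eK := by module
    rw [hcomb, map_sub, map_smul, hg1, heK]
  have hfix : ∀ r : B → ℂ, formF M k r = 0 → formF M l r = 0 → (g^m) r = r := by
    intro r h1 h2
    have h3 : g r = (1:ℂ) • r := by
      rw [hg, Module.End.mul_apply, sigmaE_apply l r, h2, zero_smul, sub_zero,
        sigmaE_apply k r, h1, zero_smul, sub_zero, one_smul]
    rw [pow_eig h3 m, one_pow, one_smul]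
  have hden : (4 - κ^2) ≠ 0 := by
    have hsin := Real.sin_pos_of_pos_of_lt_pi hθpos hθlt
    have h9 : (4 : ℝ) - (kappaR M k l)^2 ≠ 0 := by
      rw [hκ]
      nlinarith [Real.sin_sq_add_cos_sq θ]
    rw [hκdef]
    intro hcon
    apply h9
    have : ((4 - (kappaR M k l)^2 : ℝ) : ℂ) = 0 := by
      push_cast
      linear_combination hcon
    exact_mod_cast this
  apply LinearMap.ext
  intro v
  rw [Module.End.one_apply]
  set x : ℂ := (2 * formF M k v - κ * formF M l v)/(4 - κ^2) with hx
  set y : ℂ := (2 * formF M l v - κ * formF M k v)/(4 - κ^2) with hy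
  set r : B → ℂ := v - x • eK - y • eL with hr
  have hrk : formF M k r = 0 := by
    rw [hr, map_sub, map_sub, map_smul, map_smul, hformKK, hformKL, hx, hy]
    field_simp
    linear_combination (-(formF M k v)) * mul_inv_cancel₀ hden
  have hrl : formF M l r = 0 := by
    rw [hr, map_sub, map_sub, map_smul, map_smul, hformLK, hformLL, hx, hy]
    field_simp
    linear_combination (-(formF M l v)) * mul_inv_cancel₀ hden
  have hdecomp : v = x • eK + y • eL + r := by
    rw [hr]
    module
  rw [hdecomp, map_add, map_add, map_smul, map_smul, heK, heL, hfix r hrk hrl]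

theorem sigmaE_liftable : M.IsLiftable (sigmaE M) := by
  intro k l
  rcases eq_or_ne k l with rfl | hkl
  · rw [M.diagonal, pow_one, sigmaE_sq]
  · rcases eq_or_ne (M k l) 0 with h0 | h0
    · rw [h0, pow_zero]
    · exact sigmaE_braid hkl h0

theorem simple_injective (cs : CoxeterSystem M W) : Function.Injective cs.simple := by
  intro i j hij
  by_contra hne
  have h1 : sigmaE M i = sigmaE M j := by
    have e1 := cs.lift_apply_simple (sigmaE_liftable (M := M)) i
    have e2 := cs.lift_apply_simple (sigmaE_liftable (M := M)) j
    rw [← e1, ← e2, hij]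
  have h2 := DFunLike.congr_fun h1 ((Pi.single i 1 : B → ℂ))
  have h3 := congrFun h2 i
  rw [sigmaE_apply, sigmaE_apply, formF_single, formF_single, kappaR_diag] at h3
  have h4 : (Pi.single i 1 : B → ℂ) i = 1 := by simp
  have h5 : (Pi.single j 1 : B → ℂ) i = 0 := by
    simp [Pi.single_apply, hne]
  simp only [Pi.sub_apply, Pi.smul_apply, h4, h5, smul_eq_mul] at h3
  push_cast at h3
  norm_num at h3

end Geometric

/-! ### Part IV: greedy (lexicographically first) sorting words -/

section Greedy

variable {n : ℕ} [NeZero n] {W₂ : Type*} [Group W₂] {M₂ : CoxeterMatrix (Fin n)}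
  (cs : CoxeterSystem M₂ W₂)

theorem gl_exists (j : Fin n) (k : ℕ) : ∃ q, k ≤ q ∧ gammaLetter n q = j := by
  have hn : 0 < n := Nat.pos_of_ne_zero (NeZero.ne n)
  refine ⟨n * (k / n + 1) + j, ?_, ?_⟩
  · have h1 := Nat.div_add_mod k n
    have h2 := Nat.mod_lt k hn
    have h3 : n * (k / n + 1) = n * (k / n) + n := by ring
    omega
  · unfold gammaLetter
    apply Fin.ext
    show (n * (k / n + 1) + (j:ℕ)) % n = (j:ℕ)
    rw [Nat.mul_add_mod]
    exact Nat.mod_eq_of_lt j.isLt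

theorem gl_inj {q q' : ℕ} (h : gammaLetter n q = gammaLetter n q') (h2 : q ≤ q') (h3 : q' < q + n) : q = q' := by
  have hn : 0 < n := Nat.pos_of_ne_zero (NeZero.ne n)
  have hval : q % n = q' % n := congrArg Fin.val h
  rcases Nat.exists_eq_add_of_le h2 with ⟨d, rfl⟩
  have h4 : d < n := by omega
  have h5 : (q + d) % n = ((q % n) + d) % n := by
    rw [Nat.add_mod, Nat.mod_eq_of_lt h4]
  rw [h5] at hval
  have h6 : q % n < n := Nat.mod_lt _ hn
  by_cases h8 : q % n + d < n
  · rw [Nat.mod_eq_of_lt h8] at hval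
    omega
  · have h9 : (q % n + d) % n = q % n + d - n := by
      rw [Nat.mod_eq_sub_mod (by omega)]
      exact Nat.mod_eq_of_lt (by omega)
    rw [h9] at hval
    omega

theorem gl_add_mul (q t : ℕ) : gammaLetter n (q + t * n) = gammaLetter n q := by
  unfold gammaLetter
  apply Fin.ext
  show (q + t * n) % n = q % n
  rw [Nat.add_mul_mod_self_right]

theorem exists_descent_pos {w : W₂} (hw : w ≠ 1) (k : ℕ) :
    ∃ q, k ≤ q ∧ cs.IsLeftDescent w (gammaLetter n q) := by
  obtain ⟨j, hj⟩ := cs.exists_leftDescent_of_ne_one hw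
  obtain ⟨q, hq1, hq2⟩ := gl_exists j k
  exact ⟨q, hq1, hq2 ▸ hj⟩

/-- first position `≥ k` whose letter is a left descent of `w` -/
noncomputable def dpos (k : ℕ) (w : W₂) : ℕ :=
  if h : ∃ q, k ≤ q ∧ cs.IsLeftDescent w (gammaLetter n q) then Nat.find h else 0

theorem dpos_spec (k : ℕ) {w : W₂} (hw : w ≠ 1) :
    k ≤ dpos cs k w ∧ cs.IsLeftDescent w (gammaLetter n (dpos cs k w)) := by
  have hex := exists_descent_pos cs hw k
  unfold dpos
  rw [dif_pos hex]
  exact Nat.find_spec hex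

theorem dpos_min {k : ℕ} {w : W₂} {q : ℕ} (hq : k ≤ q)
    (hd : cs.IsLeftDescent w (gammaLetter n q)) : dpos cs k w ≤ q := by
  unfold dpos
  rw [dif_pos ⟨q, hq, hd⟩]
  exact Nat.find_min' _ ⟨hq, hd⟩

/-- the greedy (γ-sorting) list of positions of `w`, starting from position `k` -/
noncomputable def grL (k : ℕ) (w : W₂) : List ℕ :=
  if h : w = 1 then [] else
    (dpos cs k w) :: grL (dpos cs k w + 1) (cs.simple (gammaLetter n (dpos cs k w)) * w)
termination_by cs.length w
decreasing_by exact (dpos_spec cs k h).2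

theorem grL_one (k : ℕ) : grL cs k (1 : W₂) = [] := by
  rw [grL]
  simp

theorem grL_cons (k : ℕ) {w : W₂} (hw : w ≠ 1) :
    grL cs k w = dpos cs k w :: grL cs (dpos cs k w + 1) (cs.simple (gammaLetter n (dpos cs k w)) * w) := by
  rw [grL]
  simp [hw]

theorem grL_ge : ∀ (N : ℕ) (w : W₂) (k : ℕ), cs.length w ≤ N → ∀ x ∈ grL cs k w, k ≤ x := by
  intro N
  induction N with
  | zero =>
    intro w k hw x hx
    have : w = 1 := cs.length_eq_zero_iff.mp (by omega)
    rw [this, grL_one] at hx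
    simp at hx
  | succ N ih =>
    intro w k hw x hx
    by_cases h1 : w = 1
    · rw [h1, grL_one] at hx
      simp at hx
    · rw [grL_cons cs k h1] at hx
      have hd : cs.length (cs.simple (gammaLetter n (dpos cs k w)) * w) < cs.length w :=
        (dpos_spec cs k h1).2
      rcases List.mem_cons.mp hx with rfl | hx'
      · exact (dpos_spec cs k h1).1
      · have := ih _ _ (by omega) x hx'
        have := (dpos_spec cs k h1).1
        omega

theorem grL_sorted : ∀ (N : ℕ) (w : W₂) (k : ℕ), cs.length w ≤ N →
    List.Pairwise (· < ·) (grL cs k w) := by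
  intro N
  induction N with
  | zero =>
    intro w k hw
    have : w = 1 := cs.length_eq_zero_iff.mp (by omega)
    rw [this, grL_one]
    simp
  | succ N ih =>
    intro w k hw
    by_cases h1 : w = 1
    · rw [h1, grL_one]; simp
    · rw [grL_cons cs k h1]
      have hd : cs.length (cs.simple (gammaLetter n (dpos cs k w)) * w) < cs.length w :=
        (dpos_spec cs k h1).2
      rw [List.pairwise_cons]
      constructor
      · intro b hb
        have := grL_ge cs N _ _ (by omega) b hb
        omega
      · exact ih _ _ (by omega)

theorem grL_spec : ∀ (N : ℕ) (w : W₂) (k : ℕ), cs.length w ≤ N →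
    (grL cs k w).length = cs.length w ∧ cs.wordProd ((grL cs k w).map (gammaLetter n)) = w := by
  intro N
  induction N with
  | zero =>
    intro w k hw
    have h0 : w = 1 := cs.length_eq_zero_iff.mp (by omega)
    rw [h0, grL_one]
    simp
  | succ N ih =>
    intro w k hw
    by_cases h1 : w = 1
    · rw [h1, grL_one]; simp
    · rw [grL_cons cs k h1]
      have hdesc := (dpos_spec cs k h1).2
      have hd : cs.length (cs.simple (gammaLetter n (dpos cs k w)) * w) < cs.length w := hdesc
      have hlen : cs.length (cs.simple (gammaLetter n (dpos cs k w)) * w) + 1 = cs.length w :=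
        cs.isLeftDescent_iff.mp hdesc
      obtain ⟨ih1, ih2⟩ := ih (cs.simple (gammaLetter n (dpos cs k w)) * w) (dpos cs k w + 1) (by omega)
      constructor
      · simp only [List.length_cons, ih1]
        omega
      · rw [List.map_cons, cs.wordProd_cons, ih2, cs.simple_mul_simple_cancel_left]

theorem grL_reduced (w : W₂) (k : ℕ) : cs.IsReduced ((grL cs k w).map (gammaLetter n)) := by
  obtain ⟨h1, h2⟩ := grL_spec cs (cs.length w) w k le_rfl
  unfold CoxeterSystem.IsReduced
  rw [h2, List.length_map, h1]

theorem grL_min : ∀ (N : ℕ) (w : W₂) (k : ℕ), cs.length w ≤ N →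
    ∀ L : List ℕ, List.Pairwise (· < ·) L → (∀ x ∈ L, k ≤ x) →
    cs.IsReduced (L.map (gammaLetter n)) → cs.wordProd (L.map (gammaLetter n)) = w →
    (grL cs k w = L ∨ List.Lex (· < ·) (grL cs k w) L) := by
  intro N
  induction N with
  | zero =>
    intro w k hw L hLs hLk hLred hLprod
    have h0 : w = 1 := cs.length_eq_zero_iff.mp (by omega)
    have hL0 : L.length = 0 := by
      have := hLred
      unfold CoxeterSystem.IsReduced at this
      rw [hLprod, h0] at this
      simp at this
      omega
    rw [h0, grL_one, List.length_eq_zero_iff.mp hL0]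
    exact Or.inl rfl
  | succ N ih =>
    intro w k hw L hLs hLk hLred hLprod
    by_cases h1 : w = 1
    · have hL0 : L.length = 0 := by
        have := hLred
        unfold CoxeterSystem.IsReduced at this
        rw [hLprod, h1] at this
        simp at this
        omega
      rw [h1, grL_one, List.length_eq_zero_iff.mp hL0]
      exact Or.inl rfl
    · have hLne : L ≠ [] := by
        intro hcon
        apply h1
        rw [hcon] at hLprod
        simpa using hLprod.symm
      obtain ⟨a, L', rfl⟩ := List.exists_cons_of_ne_nil hLne
      -- the first letter of a reduced word is a left descent
      have hred' : cs.IsReduced (L'.map (gammaLetter n)) := by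
        have := CoxeterSystem.IsReduced.drop (ω := (a :: L').map (gammaLetter n)) hLred 1
        simpa using this
      have hprodcons : cs.simple (gammaLetter n a) * cs.wordProd (L'.map (gammaLetter n)) = w := by
        rw [← cs.wordProd_cons, ← List.map_cons]
        exact hLprod
      have hlenw : cs.length w = L'.length + 1 := by
        have := hLred
        unfold CoxeterSystem.IsReduced at this
        rw [hLprod] at this
        simpa using this
      have hdesca : cs.IsLeftDescent w (gammaLetter n a) := by
        show cs.length (cs.simple (gammaLetter n a) * w) < cs.length w
        have h2 : cs.simple (gammaLetter n a) * w = cs.wordProd (L'.map (gammaLetter n)) := by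
          rw [← hprodcons, cs.simple_mul_simple_cancel_left]
        rw [h2]
        have := cs.length_wordProd_le (L'.map (gammaLetter n))
        rw [List.length_map] at this
        omega
      have hka : k ≤ a := hLk a (List.mem_cons_self)
      have hpa : dpos cs k w ≤ a := dpos_min cs hka hdesca
      rcases lt_or_eq_of_le hpa with hlt | heq
      · right
        rw [grL_cons cs k h1]
        exact List.Lex.rel hlt
      · -- heads agree
        rw [grL_cons cs k h1, heq]
        have hdpos_desc := (dpos_spec cs k h1).2
        have hw' : cs.length (cs.simple (gammaLetter n a) * w) ≤ N := by
          have h3 : cs.length (cs.simple (gammaLetter n (dpos cs k w)) * w) < cs.length w :=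
            hdpos_desc
          rw [heq] at h3
          omega
      -- product of the tail
        have hprod' : cs.wordProd (L'.map (gammaLetter n)) = cs.simple (gammaLetter n a) * w := by
          rw [← hprodcons, cs.simple_mul_simple_cancel_left]
        have hL'k : ∀ x ∈ L', a + 1 ≤ x := by
          intro x hx
          have := (List.pairwise_cons.mp hLs).1 x hx
          omega
        have := ih (cs.simple (gammaLetter n a) * w) (a+1) hw' L' (List.pairwise_cons.mp hLs).2
          hL'k hred' hprod'
        rcases this with h4 | h4
        · left
          rw [h4]
        · right
          exact List.Lex.cons h4

theorem lex_trichot : ∀ l m : List ℕ, List.Lex (·<·) l m ∨ l = m ∨ List.Lex (·<·) m l := by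
  intro l
  induction l with
  | nil =>
    intro m
    cases m with
    | nil => right; left; rfl
    | cons b t => left; exact List.Lex.nil
  | cons a t ih =>
    intro m
    cases m with
    | nil => right; right; exact List.Lex.nil
    | cons b t' =>
      rcases lt_trichotomy a b with h | rfl | h
      · left; exact List.Lex.rel h
      · rcases ih t' with h2 | rfl | h2
        · left; exact List.Lex.cons h2
        · right; left; rfl
        · right; right; exact List.Lex.cons h2
      · right; right; exact List.Lex.rel h

theorem mod_diff {q x : ℕ} (h2 : q ≤ x) (h : x % n = q % n) : ∃ t, x = q + t * n := by
  have hm : Nat.ModEq n q x := h.symm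
  obtain ⟨t, ht⟩ := (Nat.modEq_iff_dvd' h2).mp hm
  refine ⟨t, by rw [mul_comm t n]; omega⟩

theorem sort_eq_grL {w : W₂} {A : Finset ℕ}
    (h1 : cs.IsReduced ((A.sort (· ≤ ·)).map (gammaLetter n)))
    (h2 : cs.wordProd ((A.sort (· ≤ ·)).map (gammaLetter n)) = w)
    (h3 : ∀ A' : Finset ℕ, cs.IsReduced ((A'.sort (· ≤ ·)).map (gammaLetter n)) →
      cs.wordProd ((A'.sort (· ≤ ·)).map (gammaLetter n)) = w →
      ¬ List.Lex (· < ·) (A'.sort (· ≤ ·)) (A.sort (· ≤ ·))) :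
    A.sort (· ≤ ·) = grL cs 0 w := by
  have hs := (Finset.sortedLT_sort A).pairwise
  have h4 := grL_min cs (cs.length w) w 0 le_rfl (A.sort (· ≤ ·)) hs (by simp) h1 h2
  rcases h4 with h4 | h4
  · exact h4.symm
  · exfalso
    have hGs : List.Pairwise (· < ·) (grL cs 0 w) := grL_sorted cs (cs.length w) w 0 le_rfl
    have hGsort : (grL cs 0 w).toFinset.sort (· ≤ ·) = grL cs 0 w :=
      (List.toFinset_sort _ hGs.nodup).mpr (hGs.imp le_of_lt)
    refine h3 (grL cs 0 w).toFinset ?_ ?_ ?_ <;> rw [hGsort]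
    · exact grL_reduced cs w 0
    · exact (grL_spec cs (cs.length w) w 0 le_rfl).2
    · exact h4

theorem grL_shift (u : W₂) (k k' : ℕ) (hkk : k ≤ k')
    (hnd : ∀ q, k ≤ q → q < k' → ¬ cs.IsLeftDescent u (gammaLetter n q)) :
    grL cs k u = grL cs k' u := by
  by_cases h1 : u = 1
  · rw [h1, grL_one, grL_one]
  · have s1 := dpos_spec cs k h1
    have s2 := dpos_spec cs k' h1
    have hd : dpos cs k u = dpos cs k' u := by
      have hle : dpos cs k u ≤ dpos cs k' u := dpos_min cs (le_trans hkk s2.1) s2.2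
      have h5 : k' ≤ dpos cs k u := by
        by_contra hcon
        push_neg at hcon
        exact hnd _ s1.1 hcon s1.2
      have hge : dpos cs k' u ≤ dpos cs k u := dpos_min cs h5 s1.2
      omega
    rw [grL_cons cs k h1, grL_cons cs k' h1, hd]

theorem grL_descend {v : W₂} {k : ℕ}
    (hdec : ∀ q, k ≤ q → q + n ∈ grL cs k v → q ∈ grL cs k v) :
    ∀ (t q : ℕ), k ≤ q → q + t * n ∈ grL cs k v → q ∈ grL cs k v := by
  intro t
  induction t with
  | zero =>
    intro q h1 h2
    simpa using h2
  | succ t ih =>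
    intro q h1 h2
    have h3 : q + (t+1) * n = (q + t * n) + n := by ring
    rw [h3] at h2
    exact ih q h1 (hdec (q + t*n) (by omega) h2)

theorem descent_letter_mem {u v : W₂} (h : leE cs u v) {ω : List (Fin n)}
    (hred : cs.IsReduced ω) (hprod : cs.wordProd ω = v) {j : Fin n}
    (hdesc : cs.IsLeftDescent u j) : j ∈ ω := by
  obtain ⟨m, hm1, hm2, hm3⟩ := h ω hred hprod
  obtain ⟨m', hsub', hlen', hprod'⟩ := exchangeL cs m hm3 (cs.isReflection_simple j) hdesc
  have hρ0 : cs.wordProd (m' ++ m.reverse) = cs.simple j := by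
    rw [cs.wordProd_append, hprod', cs.wordProd_reverse, hm3, mul_assoc,
      mul_inv_cancel, mul_one]
  obtain ⟨ρ, hρsub, hρred, hρprod⟩ := exists_reduced_sublist cs (m' ++ m.reverse)
  rw [hρ0] at hρprod
  have hρ1 : ρ.length = 1 := by
    have := hρred
    unfold CoxeterSystem.IsReduced at this
    rw [hρprod, cs.length_simple] at this
    omega
  obtain ⟨c, rfl⟩ := List.length_eq_one_iff.mp hρ1
  have hc : cs.simple c = cs.simple j := by
    rw [← cs.wordProd_singleton c, hρprod]
  have hcj : c = j := simple_injective cs hc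
  have hcmem : c ∈ m' ++ m.reverse := hρsub.subset (List.mem_singleton_self c)
  rw [hcj] at hcmem
  rcases List.mem_append.mp hcmem with h5 | h5
  · exact hm1.subset (hsub'.subset h5)
  · exact hm1.subset (List.mem_reverse.mp h5)

theorem main : ∀ (N : ℕ) (v : W₂), cs.length v ≤ N → ∀ (k : ℕ) (u : W₂),
    (∀ q, k ≤ q → q + n ∈ grL cs k v → q ∈ grL cs k v) → leE cs u v →
    ∀ x ∈ grL cs k u, x ∈ grL cs k v := by
  intro N
  induction N with
  | zero =>
    intro v hv k u hdec hle x hx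
    have h0 : v = 1 := cs.length_eq_zero_iff.mp (by omega)
    subst h0
    rw [leE_one cs hle, grL_one] at hx
    simp at hx
  | succ N ih =>
    intro v hv k u hdec hle x hx
    by_cases h1 : v = 1
    · subst h1
      rw [leE_one cs hle, grL_one] at hx
      simp at hx
    · have hps := dpos_spec cs k h1
      set p := dpos cs k v with hpdef
      set c := gammaLetter n p with hcdef
      have hL : grL cs k v = p :: grL cs (p+1) (cs.simple c * v) := grL_cons cs k h1
      have hlv' : cs.length (cs.simple c * v) ≤ N := by
        have h2 : cs.length (cs.simple c * v) < cs.length v := hps.2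
        omega
      have hCL2 : ∀ q, k ≤ q → q < p → ¬ cs.IsLeftDescent u (gammaLetter n q) := by
        intro q hq1 hq2 hdesc
        have hmem : gammaLetter n q ∈ (grL cs k v).map (gammaLetter n) :=
          descent_letter_mem cs hle (grL_reduced cs v k)
            ((grL_spec cs (cs.length v) v k le_rfl).2) hdesc
        obtain ⟨x', hx', hglx⟩ := List.mem_map.mp hmem
        have hx'k : k ≤ x' := grL_ge cs (cs.length v) v k le_rfl x' hx'
        have hx'p : p ≤ x' := by
          rw [hL] at hx'
          rcases List.mem_cons.mp hx' with rfl | h5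
          · exact le_rfl
          · have := grL_ge cs (cs.length (cs.simple c * v)) _ (p+1) le_rfl x' h5
            omega
        have hval : x' % n = q % n := congrArg Fin.val hglx
        obtain ⟨t, ht⟩ := mod_diff (by omega : q ≤ x') hval
        have hqmem : q ∈ grL cs k v := grL_descend cs hdec t q hq1 (by rw [← ht]; exact hx')
        rw [hL] at hqmem
        rcases List.mem_cons.mp hqmem with rfl | h6
        · omega
        · have := grL_ge cs (cs.length (cs.simple c * v)) _ (p+1) le_rfl q h6
          omega
      have hdec' : ∀ q, p+1 ≤ q → q + n ∈ grL cs (p+1) (cs.simple c * v) →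
          q ∈ grL cs (p+1) (cs.simple c * v) := by
        intro q h9 h10
        have h11 : q + n ∈ grL cs k v := by
          rw [hL]
          exact List.mem_cons_of_mem _ h10
        have h12 := hdec q (by omega) h11
        rw [hL] at h12
        rcases List.mem_cons.mp h12 with rfl | h13
        · omega
        · exact h13
      by_cases hc : cs.IsLeftDescent u c
      · have hu1 : u ≠ 1 := by
          intro hcon
          rw [hcon] at hc
          exact cs.not_isLeftDescent_one _ hc
        have hdu : dpos cs k u = p := by
          have h6 : dpos cs k u ≤ p := dpos_min cs hps.1 hc
          have h7 := dpos_spec cs k hu1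
          have h8 : ¬ dpos cs k u < p := fun hcon => hCL2 _ h7.1 hcon h7.2
          omega
        have hLu : grL cs k u = p :: grL cs (p+1) (cs.simple c * u) := by
          have := grL_cons cs k hu1
          rw [hdu] at this
          exact this
        have hF1 : leE cs (cs.simple c * u) (cs.simple c * v) := F1 cs hle hc hps.2
        rw [hLu] at hx
        rcases List.mem_cons.mp hx with rfl | hx'
        · rw [hL]
          exact List.mem_cons_self
        · rw [hL]
          exact List.mem_cons_of_mem _ (ih _ hlv' _ _ hdec' hF1 x hx')
      · have hF2 : leE cs u (cs.simple c * v) := F2 cs hle hc hps.2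
        have hshift : grL cs k u = grL cs (p+1) u := by
          apply grL_shift cs u k (p+1) (by omega)
          intro q h9 h10
          rcases Nat.lt_or_ge q p with h11 | h11
          · exact hCL2 q h9 h11
          · have h12 : q = p := by omega
            rw [h12]
            exact hc
        rw [hshift] at hx
        rw [hL]
        exact List.mem_cons_of_mem _ (ih _ hlv' _ _ hdec' hF2 x hx)

theorem sorted_subset_sublist : ∀ (l₂ l₁ : List ℕ), List.Pairwise (· < ·) l₁ →
    List.Pairwise (· < ·) l₂ → (∀ x ∈ l₁, x ∈ l₂) → l₁.Sublist l₂ := by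
  intro l₂
  induction l₂ with
  | nil =>
    intro l₁ h1 h2 h3
    cases l₁ with
    | nil => exact List.Sublist.refl _
    | cons a t => exact absurd (h3 a (List.mem_cons_self)) (by simp)
  | cons b t₂ ih =>
    intro l₁ h1 h2 h3
    cases l₁ with
    | nil => exact List.nil_sublist _
    | cons a t₁ =>
      rcases eq_or_ne a b with rfl | hab
      · refine List.Sublist.cons₂ a (ih t₁ (List.pairwise_cons.mp h1).2 (List.pairwise_cons.mp h2).2 ?_)
        intro x hx
        have h4 : a < x := (List.pairwise_cons.mp h1).1 x hx
        have h5 := h3 x (List.mem_cons_of_mem a hx)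
        rcases List.mem_cons.mp h5 with rfl | h6
        · omega
        · exact h6
      · have ha : a ∈ t₂ := by
          have := h3 a (List.mem_cons_self)
          rcases List.mem_cons.mp this with h4 | h4
          · exact absurd h4 hab
          · exact h4
        have hba : b < a := (List.pairwise_cons.mp h2).1 a ha
        refine List.Sublist.cons b (ih (a :: t₁) h1 (List.pairwise_cons.mp h2).2 ?_)
        intro x hx
        have h5 := h3 x hx
        rcases List.mem_cons.mp h5 with rfl | h6
        · exfalso
          rcases List.mem_cons.mp hx with rfl | h7
          · omega
          · have := (List.pairwise_cons.mp h1).1 x h7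
            omega
        · exact h6

end Greedy

end StmtAux

/-- For `γ`-sortable elements `u`, `v`, we have `u ≤_B v` if and only if
`α_γ(u) ⊆ α_γ(v)`. -/
theorem stmt12 (cs : CoxeterSystem M W) (u v : W) (Au Av : Finset ℕ)
    (hu : IsSortingPositions cs u Au) (hu' : BlocksDecreasing n Au)
    (hv : IsSortingPositions cs v Av) (hv' : BlocksDecreasing n Av) :
    Bruhat cs u v ↔ Au ⊆ Av := by
  have hsu : Au.sort (· ≤ ·) = StmtAux.grL cs 0 u :=
    StmtAux.sort_eq_grL cs hu.1 hu.2.1 hu.2.2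
  have hsv : Av.sort (· ≤ ·) = StmtAux.grL cs 0 v :=
    StmtAux.sort_eq_grL cs hv.1 hv.2.1 hv.2.2
  have hmemv : ∀ x : ℕ, x ∈ Av ↔ x ∈ StmtAux.grL cs 0 v := by
    intro x
    constructor
    · intro h
      rw [← hsv]
      exact (Finset.mem_sort _).mpr h
    · intro h
      rw [← hsv] at h
      exact (Finset.mem_sort _).mp h
  have hmemu : ∀ x : ℕ, x ∈ Au ↔ x ∈ StmtAux.grL cs 0 u := by
    intro x
    constructor
    · intro h
      rw [← hsu]
      exact (Finset.mem_sort _).mpr h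
    · intro h
      rw [← hsu] at h
      exact (Finset.mem_sort _).mp h
  constructor
  · rintro ⟨l, hlred, hlprod, l', hsub, hl'prod⟩
    have hle : StmtAux.leE cs u v := StmtAux.bruhat_to_leE cs l hlred hlprod l' hsub hl'prod
    have hdec : ∀ q : ℕ, 0 ≤ q → q + n ∈ StmtAux.grL cs 0 v → q ∈ StmtAux.grL cs 0 v := by
      intro q _ hq
      exact (hmemv q).mp (hv' q ((hmemv _).mpr hq))
    intro x hx
    exact (hmemv x).mpr (StmtAux.main cs (cs.length v) v le_rfl 0 u hdec hle x
      ((hmemu x).mp hx))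
  · intro hsub
    have hsublist : (Au.sort (· ≤ ·)).Sublist (Av.sort (· ≤ ·)) :=
      StmtAux.sorted_subset_sublist (Av.sort (· ≤ ·)) (Au.sort (· ≤ ·))
        ((Finset.sortedLT_sort Au).pairwise) ((Finset.sortedLT_sort Av).pairwise)
        (fun x hx => (Finset.mem_sort _).mpr (hsub ((Finset.mem_sort _).mp hx)))
    exact ⟨subwordOf n Av, hv.1, hv.2.1, subwordOf n Au,
      List.Sublist.map _ hsublist, hu.2.1⟩
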